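/- Let R be a weighted unilateral shift on ℓ²(ℕ) with weights (c_k)_{k≥1} satisfying c_k ∈ (0,1] for all k and c_k → 1 as k → ∞. Then the operator norm of R + R* equals 2. -/

import Mathlib

open MeasureTheory Filter
open scoped InnerProductSpace ComplexOrder Topology

noncomputable abbrev ell2 : Type := lp (fun _ : ℕ => ℂ) 2

/-- The canonical orthonormal basis vectors of `ℓ²(ℕ)`. -/
noncomputable def e (k : ℕ) : ell2 := lp.single 2 k 1

lemma inner_e_left (k : ℕ) (f : ell2) : ⟪e k, f⟫_ℂ = f k := by
  simp [e, lp.inner_single_left]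

lemma inner_e_e (k m : ℕ) : ⟪e k, e m⟫_ℂ = if k = m then 1 else 0 := by
  rw [inner_e_left]
  by_cases h : k = m
  · subst h; simp [e, lp.single_apply_self]
  · rw [if_neg h]
    exact lp.single_apply_ne 2 m 1 h

/-- The Hilbert basis of `ℓ²(ℕ)` given by the identity. -/
noncomputable def B : HilbertBasis ℕ ℂ ell2 := ⟨LinearIsometryEquiv.refl ℂ ell2⟩

lemma B_eq (k : ℕ) : B k = e k := by
  classical
  rw [← B.repr_symm_single]
  rfl

lemma hasSum_normSq (f : ell2) : HasSum (fun i : ℕ => ‖f i‖ ^ 2) (‖f‖ ^ 2) := by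
  have h := (B.hasSum_inner_mul_inner f f).mapL Complex.reCLM
  simp only [B_eq] at h
  have hterm : (fun i => Complex.reCLM (⟪f, e i⟫_ℂ * ⟪e i, f⟫_ℂ)) = fun i : ℕ => ‖f i‖ ^ 2 := by
    funext i
    have h1 : ⟪f, e i⟫_ℂ = (starRingEnd ℂ) (f i) := by simp [e, lp.inner_single_right]
    rw [h1, inner_e_left]
    simp [Complex.sq_norm, Complex.normSq_apply, Complex.mul_re]
  have hval : Complex.reCLM ⟪f, f⟫_ℂ = ‖f‖ ^ 2 := by
    have := inner_self_eq_norm_sq (𝕜 := ℂ) f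
    simpa [RCLike.re_to_complex] using this
  rw [hterm, hval] at h
  exact h

lemma hasSum_coords (f : ell2) : HasSum (fun i : ℕ => f i • e i) f := by
  have h := lp.hasSum_single (E := fun _ : ℕ => ℂ) ENNReal.ofNat_ne_top f
  have : ∀ i : ℕ, lp.single (E := fun _ : ℕ => ℂ) 2 i (f i) = f i • e i := by
    intro i
    have := lp.single_smul (E := fun _ : ℕ => ℂ) 2 i (f i) (1 : ℂ)
    rw [e, ← this, smul_eq_mul, mul_one]
  simpa [this] using h

lemma shift_apply (c : ℕ → ℝ) (R : ell2 →L[ℂ] ell2)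
    (hR : ∀ k : ℕ, R (e k) = (c (k + 1) : ℂ) • e (k + 1)) (f : ell2) (n : ℕ) :
    (R f : ∀ _ : ℕ, ℂ) n = if n = 0 then 0 else (c n : ℂ) * f (n - 1) := by
  classical
  have hs3 := ((hasSum_coords f).mapL R).mapL (innerSL ℂ (e n))
  have hterm : ∀ i : ℕ, innerSL ℂ (e n) (R ((f : ∀ _ : ℕ, ℂ) i • e i)) =
      (f : ∀ _ : ℕ, ℂ) i * ((c (i + 1) : ℂ) * (if n = i + 1 then 1 else 0)) := by
    intro i
    simp only [innerSL_apply_apply, ContinuousLinearMap.map_smul, hR, inner_smul_right, inner_e_e,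
      smul_eq_mul]
  simp only [hterm] at hs3
  rw [← inner_e_left n (R f)]
  have hval : ⟪e n, R f⟫_ℂ = innerSL ℂ (e n) (R f) := rfl
  rw [hval]
  cases n with
  | zero =>
    have h0 : HasSum (fun _ : ℕ => (0 : ℂ)) (innerSL ℂ (e 0) (R f)) := by
      refine hs3.congr_fun fun i => ?_
      simp
    simpa using h0.unique hasSum_zero
  | succ m =>
    have hone : HasSum (fun i : ℕ => (f : ∀ _ : ℕ, ℂ) i * ((c (i + 1) : ℂ) *
        (if m + 1 = i + 1 then 1 else 0)))
        ((f : ∀ _ : ℕ, ℂ) m * ((c (m + 1) : ℂ) * (if m + 1 = m + 1 then 1 else 0))) := by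
      refine hasSum_single m fun i hi => ?_
      have : ¬ (m + 1 = i + 1) := by omega
      simp [this, Ne.symm hi]
    rw [hs3.unique hone]
    simp [mul_comm]

lemma arith_aux (ε T M : ℝ) (hε : 0 < ε) (h1 : 0 ≤ T) (h2 : 0 ≤ M) (h3 : 4 ≤ M * ε)
    (h4 : 2 * (M * (1 - ε / 4)) ≤ T * (M + 1)) : 2 - ε ≤ T := by
  nlinarith

lemma norm_shift_le (c : ℕ → ℝ) (hc : ∀ k : ℕ, 0 < c (k + 1) ∧ c (k + 1) ≤ 1)
    (R : ell2 →L[ℂ] ell2)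
    (hR : ∀ k : ℕ, R (e k) = (c (k + 1) : ℂ) • e (k + 1)) : ‖R‖ ≤ 1 := by
  refine R.opNorm_le_bound zero_le_one fun f => ?_
  rw [one_mul]
  have h1 := hasSum_normSq f
  have h2 := hasSum_normSq (R f)
  have hinj : Function.Injective (fun n : ℕ => n + 1) := add_left_injective 1
  have h0 : ∀ x ∉ Set.range (fun n : ℕ => n + 1), ‖(R f : ∀ _ : ℕ, ℂ) x‖ ^ 2 = 0 := by
    intro x hx
    have hx0 : x = 0 := by
      by_contra h
      exact hx ⟨x - 1, Nat.succ_pred_eq_of_pos (Nat.pos_of_ne_zero h)⟩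
    subst hx0
    rw [shift_apply c R hR f 0]
    simp
  have h3 : HasSum (fun n : ℕ => ‖(R f : ∀ _ : ℕ, ℂ) (n + 1)‖ ^ 2) (‖R f‖ ^ 2) :=
    (hinj.hasSum_iff h0).2 h2
  have hle : ∀ n : ℕ, ‖(R f : ∀ _ : ℕ, ℂ) (n + 1)‖ ^ 2 ≤ ‖(f : ∀ _ : ℕ, ℂ) n‖ ^ 2 := by
    intro n
    rw [shift_apply c R hR f (n + 1)]
    simp only [Nat.add_sub_cancel, if_neg (Nat.succ_ne_zero n)]
    rw [norm_mul]
    have hc1 : ‖((c (n + 1) : ℝ) : ℂ)‖ ≤ 1 := by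
      rw [Complex.norm_real, Real.norm_eq_abs, abs_of_pos (hc n).1]
      exact (hc n).2
    calc (‖((c (n + 1) : ℝ) : ℂ)‖ * ‖(f : ∀ _ : ℕ, ℂ) n‖) ^ 2
        = ‖((c (n + 1) : ℝ) : ℂ)‖ ^ 2 * ‖(f : ∀ _ : ℕ, ℂ) n‖ ^ 2 := by ring
      _ ≤ 1 * ‖(f : ∀ _ : ℕ, ℂ) n‖ ^ 2 := by
          refine mul_le_mul_of_nonneg_right ?_ (sq_nonneg _)
          nlinarith [norm_nonneg ((c (n + 1) : ℂ))]
      _ = ‖(f : ∀ _ : ℕ, ℂ) n‖ ^ 2 := one_mul _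
  have hfin : ‖R f‖ ^ 2 ≤ ‖f‖ ^ 2 := hasSum_le hle h3 h1
  nlinarith [norm_nonneg (R f), norm_nonneg f]

/-- If the weights of a weighted unilateral shift `R` lie in `(0,1]` and tend to `1`, then
`‖R + R*‖ = 2`. -/
theorem norm_re_shift_eq_two (c : ℕ → ℝ)
    (hc : ∀ k : ℕ, 0 < c (k + 1) ∧ c (k + 1) ≤ 1)
    (hlim : Tendsto (fun k : ℕ => c (k + 1)) atTop (𝓝 1))
    (R : ell2 →L[ℂ] ell2)
    (hR : ∀ k : ℕ, R (e k) = (c (k + 1) : ℂ) • e (k + 1)) :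
    ‖R + ContinuousLinearMap.adjoint R‖ = 2 := by
  classical
  set A := R + ContinuousLinearMap.adjoint R with hA
  refine le_antisymm ?_ ?_
  · have hRle : ‖R‖ ≤ 1 := norm_shift_le c hc R hR
    have hAd : ‖ContinuousLinearMap.adjoint R‖ = ‖R‖ :=
      ContinuousLinearMap.adjoint.norm_map R
    calc ‖A‖ ≤ ‖R‖ + ‖ContinuousLinearMap.adjoint R‖ := norm_add_le _ _
      _ ≤ 2 := by rw [hAd]; linarith
  · refine le_of_forall_sub_le fun ε hε => ?_
    obtain ⟨N, hN⟩ := eventually_atTop.1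
      (hlim.eventually (eventually_gt_nhds (show 1 - ε / 4 < 1 by linarith)))
    set m := ⌈(4 : ℝ) / ε⌉₊ with hm
    set s : Finset ℕ := Finset.Ico N (N + (m + 1)) with hs
    set x : ell2 := ∑ k ∈ s, e k with hx
    have hxe : ∀ j : ℕ, ⟪x, e j⟫_ℂ = if j ∈ s then 1 else 0 := by
      intro j
      rw [hx, sum_inner]
      rw [Finset.sum_congr rfl fun k _ => inner_e_e k j]
      simp [Finset.sum_ite_eq]
    have hxx : ⟪x, x⟫_ℂ = ((m : ℂ) + 1) := by
      have : ⟪x, x⟫_ℂ = ∑ j ∈ s, ⟪x, e j⟫_ℂ := by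
        conv_lhs => rw [hx]
        exact inner_sum s e x
      rw [this, Finset.sum_congr rfl fun j hj => by rw [hxe j, if_pos hj]]
      simp [hs]
    have hnx : ‖x‖ ^ 2 = (m : ℝ) + 1 := by
      have h := inner_self_eq_norm_sq (𝕜 := ℂ) x
      rw [hxx] at h
      simpa [RCLike.re_to_complex] using h.symm
    have hxRx : ⟪x, R x⟫_ℂ = ∑ k ∈ s, (c (k + 1) : ℂ) * (if k + 1 ∈ s then 1 else 0) := by
      have h1 : R x = ∑ k ∈ s, (c (k + 1) : ℂ) • e (k + 1) := by
        rw [hx, map_sum]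
        exact Finset.sum_congr rfl fun k _ => hR k
      rw [h1, inner_sum]
      exact Finset.sum_congr rfl fun k _ => by rw [inner_smul_right, hxe]
    have hre : (⟪x, R x⟫_ℂ).re = ∑ k ∈ s, c (k + 1) * (if k + 1 ∈ s then 1 else 0) := by
      rw [hxRx, Complex.re_sum]
      refine Finset.sum_congr rfl fun k _ => ?_
      split <;> simp
    have hlow : (m : ℝ) * (1 - ε / 4) ≤ (⟪x, R x⟫_ℂ).re := by
      rw [hre]
      have hsub : Finset.Ico N (N + m) ⊆ s := Finset.Ico_subset_Ico_right (by omega)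
      calc (m : ℝ) * (1 - ε / 4) = ∑ _k ∈ Finset.Ico N (N + m), (1 - ε / 4) := by
            rw [Finset.sum_const, Nat.card_Ico]
            simp [nsmul_eq_mul]
        _ ≤ ∑ k ∈ Finset.Ico N (N + m), c (k + 1) * (if k + 1 ∈ s then 1 else 0) := by
            refine Finset.sum_le_sum fun k hk => ?_
            have hk' := Finset.mem_Ico.1 hk
            have h1 : k + 1 ∈ s := Finset.mem_Ico.2 ⟨by omega, by omega⟩
            rw [if_pos h1, mul_one]
            exact le_of_lt (hN k hk'.1)
        _ ≤ ∑ k ∈ s, c (k + 1) * (if k + 1 ∈ s then 1 else 0) := by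
            refine Finset.sum_le_sum_of_subset_of_nonneg hsub fun k _ _ => ?_
            split_ifs with h
            · simpa using le_of_lt (hc k).1
            · simp
    have hAdj : ⟪x, (ContinuousLinearMap.adjoint R) x⟫_ℂ = (starRingEnd ℂ) ⟪x, R x⟫_ℂ := by
      rw [ContinuousLinearMap.adjoint_inner_right (𝕜 := ℂ) R x x]
      exact (inner_conj_symm (𝕜 := ℂ) (R x) x).symm
    have hreA : (⟪x, A x⟫_ℂ).re = 2 * (⟪x, R x⟫_ℂ).re := by
      rw [hA]
      simp only [ContinuousLinearMap.add_apply, inner_add_right, hAdj, Complex.add_re,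
        Complex.conj_re]
      ring
    have hb : (⟪x, A x⟫_ℂ).re ≤ ‖A‖ * ((m : ℝ) + 1) := by
      have h1 : (⟪x, A x⟫_ℂ).re ≤ ‖x‖ * ‖A x‖ := by
        have := re_inner_le_norm (𝕜 := ℂ) x (A x)
        simpa [RCLike.re_to_complex] using this
      have h2 : ‖A x‖ ≤ ‖A‖ * ‖x‖ := A.le_opNorm x
      calc (⟪x, A x⟫_ℂ).re ≤ ‖x‖ * ‖A x‖ := h1
        _ ≤ ‖x‖ * (‖A‖ * ‖x‖) := by
            exact mul_le_mul_of_nonneg_left h2 (norm_nonneg x)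
        _ = ‖A‖ * ‖x‖ ^ 2 := by ring
        _ = ‖A‖ * ((m : ℝ) + 1) := by rw [hnx]
    have h4 : 4 ≤ (m : ℝ) * ε := by
      have := Nat.le_ceil ((4 : ℝ) / ε)
      rw [div_le_iff₀ hε] at this
      exact this
    have hA0 : 0 ≤ ‖A‖ := norm_nonneg _
    have hm0 : (0 : ℝ) ≤ m := Nat.cast_nonneg m
    have key : 2 * ((m : ℝ) * (1 - ε / 4)) ≤ ‖A‖ * ((m : ℝ) + 1) := by
      calc 2 * ((m : ℝ) * (1 - ε / 4)) ≤ 2 * (⟪x, R x⟫_ℂ).re := by linarith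
        _ = (⟪x, A x⟫_ℂ).re := hreA.symm
        _ ≤ ‖A‖ * ((m : ℝ) + 1) := hb
    exact arith_aux ε ‖A‖ (m : ℝ) hε hA0 hm0 h4 key
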